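/- Let V and W be finite-dimensional real vector spaces equipped with generalized complex structures 𝓙_V and 𝓙_W, and let μ : V → W be a linear isomorphism. If the graph Γ = {(v, μ(v)) : v ∈ V} ⊆ V ⊕ W is a generalized Lagrangian subspace of V ⊕ W with respect to the twisted product structure (the direct sum of 𝓙̃_V and 𝓙_W), then μ induces an isomorphism of generalized complex structures: the map μ̂ : V ⊕ V* → W ⊕ W* given by (v, f) ↦ (μ(v), f ∘ μ⁻¹) satisfies μ̂ ∘ 𝓙_V = 𝓙_W ∘ μ̂. -/

import Mathlib

open Module LinearMap

noncomputable def gcPair (V : Type*) [AddCommGroup V] [Module ℝ V]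
    (x y : V × Module.Dual ℝ V) : ℝ :=
  -(1/2) * (x.2 y.1 + y.2 x.1)

noncomputable def IsGCS (V : Type*) [AddCommGroup V] [Module ℝ V]
    (J : (V × Module.Dual ℝ V) →ₗ[ℝ] (V × Module.Dual ℝ V)) : Prop :=
  J ∘ₗ J = -LinearMap.id ∧ ∀ x y, gcPair V (J x) (J y) = gcPair V x y

section Blocks

variable (V : Type*) [AddCommGroup V] [Module ℝ V]

noncomputable def blk1 (J : (V × Module.Dual ℝ V) →ₗ[ℝ] (V × Module.Dual ℝ V)) :
    V →ₗ[ℝ] V :=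
  (LinearMap.fst ℝ V (Module.Dual ℝ V)) ∘ₗ J ∘ₗ (LinearMap.inl ℝ V (Module.Dual ℝ V))

noncomputable def blk2 (J : (V × Module.Dual ℝ V) →ₗ[ℝ] (V × Module.Dual ℝ V)) :
    Module.Dual ℝ V →ₗ[ℝ] V :=
  (LinearMap.fst ℝ V (Module.Dual ℝ V)) ∘ₗ J ∘ₗ (LinearMap.inr ℝ V (Module.Dual ℝ V))

noncomputable def blk3 (J : (V × Module.Dual ℝ V) →ₗ[ℝ] (V × Module.Dual ℝ V)) :
    V →ₗ[ℝ] Module.Dual ℝ V :=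
  (LinearMap.snd ℝ V (Module.Dual ℝ V)) ∘ₗ J ∘ₗ (LinearMap.inl ℝ V (Module.Dual ℝ V))

noncomputable def blk4 (J : (V × Module.Dual ℝ V) →ₗ[ℝ] (V × Module.Dual ℝ V)) :
    Module.Dual ℝ V →ₗ[ℝ] Module.Dual ℝ V :=
  (LinearMap.snd ℝ V (Module.Dual ℝ V)) ∘ₗ J ∘ₗ (LinearMap.inr ℝ V (Module.Dual ℝ V))

noncomputable def ofBlocks (A : V →ₗ[ℝ] V) (B : Module.Dual ℝ V →ₗ[ℝ] V)
    (C : V →ₗ[ℝ] Module.Dual ℝ V) (D : Module.Dual ℝ V →ₗ[ℝ] Module.Dual ℝ V) :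
    (V × Module.Dual ℝ V) →ₗ[ℝ] (V × Module.Dual ℝ V) :=
  LinearMap.prod
    (A ∘ₗ LinearMap.fst ℝ V (Module.Dual ℝ V) + B ∘ₗ LinearMap.snd ℝ V (Module.Dual ℝ V))
    (C ∘ₗ LinearMap.fst ℝ V (Module.Dual ℝ V) + D ∘ₗ LinearMap.snd ℝ V (Module.Dual ℝ V))

/-- The twist `𝓙̃ = [[𝓙₁,-𝓙₂],[-𝓙₃,𝓙₄]]` of `𝓙`. -/
noncomputable def gcTwist (J : (V × Module.Dual ℝ V) →ₗ[ℝ] (V × Module.Dual ℝ V)) :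
    (V × Module.Dual ℝ V) →ₗ[ℝ] (V × Module.Dual ℝ V) :=
  ofBlocks V (blk1 V J) (-(blk2 V J)) (-(blk3 V J)) (blk4 V J)

end Blocks

section Prod

variable (U V : Type*) [AddCommGroup U] [Module ℝ U] [AddCommGroup V] [Module ℝ V]

/-- The natural identification `(U⊕V) ⊕ (U⊕V)* ≅ (U ⊕ U*) ⊕ (V ⊕ V*)`. -/
noncomputable def prodPack :
    ((U × V) × Module.Dual ℝ (U × V)) ≃ₗ[ℝ]
      (U × Module.Dual ℝ U) × (V × Module.Dual ℝ V) :=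
  ((LinearEquiv.refl ℝ (U × V)).prodCongr (Module.dualProdDualEquivDual ℝ U V).symm).trans
    (LinearEquiv.prodProdProdComm ℝ U V (Module.Dual ℝ U) (Module.Dual ℝ V))

/-- The direct sum of the structures `J_U` and `J_V` on `U ⊕ V`. -/
noncomputable def directSum
    (JU : (U × Module.Dual ℝ U) →ₗ[ℝ] (U × Module.Dual ℝ U))
    (JV : (V × Module.Dual ℝ V) →ₗ[ℝ] (V × Module.Dual ℝ V)) :
    ((U × V) × Module.Dual ℝ (U × V)) →ₗ[ℝ] ((U × V) × Module.Dual ℝ (U × V)) :=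
  (prodPack U V).symm.toLinearMap ∘ₗ (LinearMap.prodMap JU JV) ∘ₗ (prodPack U V).toLinearMap

/-- The twisted product structure on `U ⊕ V`: the direct sum of `𝓙̃_U` and `𝓙_V`. -/
noncomputable def twistedProd
    (JU : (U × Module.Dual ℝ U) →ₗ[ℝ] (U × Module.Dual ℝ U))
    (JV : (V × Module.Dual ℝ V) →ₗ[ℝ] (V × Module.Dual ℝ V)) :
    ((U × V) × Module.Dual ℝ (U × V)) →ₗ[ℝ] ((U × V) × Module.Dual ℝ (U × V)) :=
  directSum U V (gcTwist U JU) JV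

end Prod

section Subspaces

variable {X : Type*} [AddCommGroup X] [Module ℝ X]

/-- A subspace `Γ` of a GC vector space `(X, J)` is generalized isotropic if
`J(Γ ⊕ 0) ⊆ Γ ⊕ Ann(Γ)`. -/
def GenIsotropic (J : (X × Module.Dual ℝ X) →ₗ[ℝ] (X × Module.Dual ℝ X))
    (Γ : Submodule ℝ X) : Prop :=
  ∀ x ∈ Γ, J (x, 0) ∈ Γ.prod Γ.dualAnnihilator

/-- A subspace `Γ` of a GC vector space `(X, J)` is generalized coisotropic if
`J(0 ⊕ Ann(Γ)) ⊆ Γ ⊕ Ann(Γ)`. -/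
def GenCoisotropic (J : (X × Module.Dual ℝ X) →ₗ[ℝ] (X × Module.Dual ℝ X))
    (Γ : Submodule ℝ X) : Prop :=
  ∀ f ∈ Γ.dualAnnihilator, J (0, f) ∈ Γ.prod Γ.dualAnnihilator

/-- A subspace `Γ` of a GC vector space `(X, J)` is generalized Lagrangian if
`Γ ⊕ Ann(Γ)` is stable under `J`. -/
def GenLagrangian (J : (X × Module.Dual ℝ X) →ₗ[ℝ] (X × Module.Dual ℝ X))
    (Γ : Submodule ℝ X) : Prop :=
  ∀ p ∈ Γ.prod Γ.dualAnnihilator, J p ∈ Γ.prod Γ.dualAnnihilator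

end Subspaces

theorem graph_genLagrangian_implies_iso
    (V W : Type*) [AddCommGroup V] [Module ℝ V] [FiniteDimensional ℝ V]
    [AddCommGroup W] [Module ℝ W] [FiniteDimensional ℝ W]
    (JV : (V × Module.Dual ℝ V) →ₗ[ℝ] (V × Module.Dual ℝ V))
    (JW : (W × Module.Dual ℝ W) →ₗ[ℝ] (W × Module.Dual ℝ W))
    (hJV : IsGCS V JV) (hJW : IsGCS W JW)
    (μ : V ≃ₗ[ℝ] W)
    (hgraph : GenLagrangian (twistedProd V W JV JW) (LinearMap.graph μ.toLinearMap)) :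
    (μ.prodCongr μ.symm.dualMap).toLinearMap ∘ₗ JV = JW ∘ₗ (μ.prodCongr μ.symm.dualMap).toLinearMap := by
  -- auxiliary facts
  have twist_apply : ∀ (v : V) (f : Module.Dual ℝ V),
      gcTwist V JV (v, -f) = ((JV (v, f)).1, -(JV (v, f)).2) := by
    intro v f
    have hsplit : (v, f) = (v, (0 : Module.Dual ℝ V)) + (0, f) := by simp
    have hadd : JV (v, f) = JV (v, 0) + JV (0, f) := by rw [hsplit, map_add]
    have hneg : JV ((0 : V), -f) = -(JV (0, f)) := by
      rw [show ((0 : V), -f) = -((0 : V), f) by simp [Prod.ext_iff], map_neg]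
    simp only [gcTwist, ofBlocks, blk1, blk2, blk3, blk4, LinearMap.prod_apply,
      LinearMap.add_apply, LinearMap.comp_apply, LinearMap.neg_apply, LinearMap.fst_apply,
      LinearMap.snd_apply, LinearMap.inl_apply, LinearMap.inr_apply, Function.prod_apply, LinearMap.smul_apply, neg_smul, one_smul, hneg, hadd,
      Prod.ext_iff, Prod.fst_add, Prod.snd_add, Prod.fst_neg, Prod.snd_neg]
    constructor <;> abel
  apply LinearMap.ext
  rintro ⟨v, f⟩
  -- the element of Γ ⊕ Ann Γ
  set φ : Module.Dual ℝ (V × W) :=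
    (-f).coprod (μ.symm.dualMap f) with hφ
  have hp : ((v, μ v), φ) ∈
      (LinearMap.graph μ.toLinearMap).prod (LinearMap.graph μ.toLinearMap).dualAnnihilator := by
    refine ⟨?_, ?_⟩
    · show (v, μ v) ∈ _
      simp [SetLike.mem_coe, LinearMap.mem_graph_iff]
    · show φ ∈ _
      rw [SetLike.mem_coe, Submodule.mem_dualAnnihilator]
      rintro ⟨x, y⟩ hxy
      rw [LinearMap.mem_graph_iff] at hxy
      simp only [LinearEquiv.coe_coe] at hxy
      simp [hφ, hxy]
  have h := hgraph _ hp
  -- compute prodPack of the element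
  have hpack : prodPack V W ((v, μ v), φ) = ((v, -f), (μ v, μ.symm.dualMap f)) := by
    simp [prodPack, hφ, Prod.ext_iff]
  rw [twistedProd, directSum] at h
  simp only [LinearMap.coe_comp, Function.comp_apply, LinearEquiv.coe_coe, hpack,
    LinearMap.prodMap_apply] at h
  rw [twist_apply] at h
  set a := (JV (v, f)).1 with ha
  set b := (JV (v, f)).2 with hb
  set q := JW (μ v, μ.symm.dualMap f) with hq
  have hsymm : (prodPack V W).symm ((a, -b), q) =
      ((a, q.1), (-b).coprod q.2) := by
    apply (prodPack V W).injective
    rw [LinearEquiv.apply_symm_apply]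
    simp [prodPack, Prod.ext_iff]
  rw [hsymm] at h
  obtain ⟨h1, h2⟩ := h
  rw [SetLike.mem_coe, LinearMap.mem_graph_iff] at h1
  rw [SetLike.mem_coe, Submodule.mem_dualAnnihilator] at h2
  have hd : q.2 = μ.symm.dualMap b := by
    ext w
    have hw := h2 (μ.symm w, w) (by rw [LinearMap.mem_graph_iff]; simp)
    simp only [LinearMap.coprod_apply, LinearMap.neg_apply] at hw
    simp only [LinearEquiv.dualMap_apply]
    linarith [hw]
  -- conclude
  show (μ.prodCongr μ.symm.dualMap) (JV (v, f)) = JW ((μ.prodCongr μ.symm.dualMap) (v, f))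
  have hlhs : (μ.prodCongr μ.symm.dualMap) (JV (v, f)) = (μ a, μ.symm.dualMap b) := rfl
  rw [hlhs]
  have hrhs : ((μ.prodCongr μ.symm.dualMap) (v, f) : W × Module.Dual ℝ W)
      = (μ v, μ.symm.dualMap f) := rfl
  rw [hrhs, ← hq]
  exact Prod.ext (by simpa using h1.symm) hd.symm
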